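/- Let n ≥ 2 and let λ₁, …, λₙ ∈ ℂ be pairwise distinct. Define, for 1 ≤ i ≤ n−1, the rational functions η_i(x) = x^{i−1} / ∏_{k=1}^n (x − λ_k) and ω_i(x) = 1/(x − λ_i) − 1/(x − λ_{i+1}). Then there exists an (n−1)×(n−1) complex matrix C such that η_i(x) = Σ_{j=1}^{n−1} C_{ij}·ω_j(x) for every x ∈ ℂ with x ≠ λ_k for all k, and det C = 1 / ∏_{1 ≤ i < j ≤ n} (λ_i − λ_j). -/

import Mathlib

open Finset Polynomial

/-- `dd lam k = ∏_{l ≠ k} (lam k - lam l)`. -/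
noncomputable def dd {n : ℕ} (lam : Fin (n+1) → ℂ) (k : Fin (n+1)) : ℂ :=
  ∏ l ∈ Finset.univ.erase k, (lam k - lam l)

lemma dd_ne_zero {n : ℕ} {lam : Fin (n+1) → ℂ} (hlam : Function.Injective lam)
    (k : Fin (n+1)) : dd lam k ≠ 0 := by
  refine Finset.prod_ne_zero_iff.mpr fun l hl => ?_
  rw [Finset.mem_erase] at hl
  exact sub_ne_zero_of_ne (fun h => hl.1 (hlam h).symm)

lemma lagrange_poly {n : ℕ} {lam : Fin (n+1) → ℂ} (hlam : Function.Injective lam)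
    (i : ℕ) (hi : i ≤ n) :
    (X ^ i : ℂ[X]) = ∑ k : Fin (n+1), C (lam k ^ i * (dd lam k)⁻¹) *
      ∏ l ∈ Finset.univ.erase k, (X - C (lam l)) := by
  have hinj : Set.InjOn lam (Finset.univ : Finset (Fin (n+1))) := hlam.injOn
  have hdeg : (X ^ i : ℂ[X]).degree < (Finset.univ : Finset (Fin (n+1))).card := by
    rw [degree_X_pow, Finset.card_univ, Fintype.card_fin]
    exact_mod_cast Nat.lt_succ_of_le hi
  have h := Lagrange.eq_interpolate hinj hdeg
  rw [Lagrange.interpolate_apply] at h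
  rw [h]
  refine Finset.sum_congr rfl fun k _ => ?_
  rw [Lagrange.basis]
  simp only [Lagrange.basisDivisor, eval_pow, eval_X]
  rw [Finset.prod_mul_distrib, ← map_prod, Finset.prod_inv_distrib]
  rw [← mul_assoc, ← C_mul]
  rfl

lemma Qmonic {n : ℕ} (lam : Fin (n+1) → ℂ) (k : Fin (n+1)) :
    (∏ l ∈ Finset.univ.erase k, (X - C (lam l))).Monic :=
  monic_prod_of_monic _ _ fun _ _ => monic_X_sub_C _

lemma QnatDegree {n : ℕ} (lam : Fin (n+1) → ℂ) (k : Fin (n+1)) :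
    (∏ l ∈ Finset.univ.erase k, (X - C (lam l))).natDegree = n := by
  rw [natDegree_prod_of_monic _ _ fun l _ => monic_X_sub_C _]
  simp [Finset.card_erase_of_mem]

lemma sum_A_zero {n : ℕ} {lam : Fin (n+1) → ℂ} (hlam : Function.Injective lam)
    (i : ℕ) (hi : i < n) :
    ∑ k : Fin (n+1), lam k ^ i * (dd lam k)⁻¹ = 0 := by
  have h := congrArg (fun p : ℂ[X] => p.coeff n) (lagrange_poly hlam i hi.le)
  simp only [finset_sum_coeff, coeff_C_mul, coeff_X_pow] at h
  rw [if_neg hi.ne'] at h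
  rw [← h.symm]
  refine (Finset.sum_congr rfl fun k _ => ?_).symm
  have : (∏ l ∈ Finset.univ.erase k, (X - C (lam l))).coeff n = 1 := by
    have := (Qmonic lam k).coeff_natDegree
    rwa [QnatDegree] at this
  rw [this, mul_one]

lemma partial_fractions {n : ℕ} {lam : Fin (n+1) → ℂ} (hlam : Function.Injective lam)
    (i : ℕ) (hi : i ≤ n) (x : ℂ) (hx : ∀ k, x ≠ lam k) :
    x ^ i / (∏ k : Fin (n+1), (x - lam k)) =
      ∑ k : Fin (n+1), (lam k ^ i * (dd lam k)⁻¹) * (1 / (x - lam k)) := by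
  have hd := dd_ne_zero hlam
  have hxk : ∀ k, x - lam k ≠ 0 := fun k => sub_ne_zero_of_ne (hx k)
  have hP : (∏ k : Fin (n+1), (x - lam k)) ≠ 0 := Finset.prod_ne_zero_iff.mpr fun k _ => hxk k
  have h := congrArg (Polynomial.eval x) (lagrange_poly hlam i hi)
  simp only [eval_pow, eval_X, eval_finset_sum, eval_mul, eval_C, eval_prod, eval_sub] at h
  rw [div_eq_iff hP, h, Finset.sum_mul]
  refine Finset.sum_congr rfl fun k _ => ?_
  rw [← Finset.mul_prod_erase _ _ (Finset.mem_univ k)]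
  have := hxk k; have := hd k
  field_simp

lemma abel_rearrange {n : ℕ} (A g : Fin (n+1) → ℂ) (hA : ∑ k, A k = 0) :
    ∑ j : Fin n, (∑ k : Fin n, if (k:ℕ) ≤ (j:ℕ) then A k.castSucc else 0) *
        (g j.castSucc - g j.succ)
      = ∑ k : Fin (n+1), A k * g k := by
  set c : Fin (n+1) → ℂ := fun m => ∑ k : Fin (n+1), if (k:ℕ) ≤ (m:ℕ) then A k else 0 with hc
  have hi : ∀ j : Fin n,
      (∑ k : Fin n, if (k:ℕ) ≤ (j:ℕ) then A k.castSucc else 0) = c j.castSucc := by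
    intro j
    simp only [hc]
    rw [Fin.sum_univ_castSucc
      (f := fun k : Fin (n+1) => if (k:ℕ) ≤ ((j.castSucc : Fin (n+1)):ℕ) then A k else 0)]
    simp only [Fin.coe_castSucc, Fin.val_last]
    rw [if_neg (by omega : ¬ n ≤ (j:ℕ)), add_zero]
  have hii : c (Fin.last n) = 0 := by
    rw [hc, ← hA]
    exact Finset.sum_congr rfl fun k _ => if_pos (by rw [Fin.val_last]; exact k.is_le)
  have hiii : ∀ j : Fin n, c j.castSucc = c j.succ - A j.succ := by
    intro j
    have : c j.succ = c j.castSucc + A j.succ := by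
      simp only [hc]
      have : ∀ k : Fin (n+1), (if (k:ℕ) ≤ ((j.succ : Fin (n+1)):ℕ) then A k else 0)
          = (if (k:ℕ) ≤ ((j.castSucc : Fin (n+1)):ℕ) then A k else 0)
            + (if k = j.succ then A k else 0) := by
        intro k
        by_cases h1 : k = j.succ
        · subst h1
          rw [if_pos le_rfl, if_neg (by simp only [Fin.val_succ, Fin.coe_castSucc]; omega),
            if_pos rfl, zero_add]
        · have hne : (k:ℕ) ≠ ((j.succ : Fin (n+1)):ℕ) := fun h => h1 (Fin.ext h)
          rw [if_neg h1, add_zero]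
          by_cases h2 : (k:ℕ) ≤ ((j.castSucc : Fin (n+1)):ℕ)
          · rw [if_pos h2, if_pos (by simp only [Fin.val_succ, Fin.coe_castSucc] at *; omega)]
          · rw [if_neg h2, if_neg (by simp only [Fin.val_succ, Fin.coe_castSucc] at *; omega)]
      simp only [this, Finset.sum_add_distrib]
      rw [Finset.sum_ite_eq' Finset.univ (j.succ) A]
      simp
    rw [this]; ring
  have hiv : c 0 = A 0 := by
    simp only [hc]
    have : ∀ k : Fin (n+1), (if (k:ℕ) ≤ ((0 : Fin (n+1)):ℕ) then A k else 0)
        = if k = 0 then A k else 0 := by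
      intro k
      by_cases h : k = 0
      · subst h; simp
      · rw [if_neg h, if_neg (fun h' => h (Fin.le_zero_iff.mp (Fin.le_def.mpr h')))]
    simp only [this]
    rw [Finset.sum_ite_eq' Finset.univ 0 A]
    simp
  simp only [hi, mul_sub]
  rw [Finset.sum_sub_distrib]
  have e1 : ∑ j : Fin n, c j.castSucc * g j.castSucc
      = ∑ m : Fin (n+1), c m * g m - c (Fin.last n) * g (Fin.last n) := by
    rw [Fin.sum_univ_castSucc (f := fun m : Fin (n+1) => c m * g m)]; ring
  have e2 : ∑ j : Fin n, c j.castSucc * g j.succ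
      = (∑ m : Fin (n+1), c m * g m - c 0 * g 0)
        - (∑ m : Fin (n+1), A m * g m - A 0 * g 0) := by
    have : ∀ j : Fin n, c j.castSucc * g j.succ
        = c j.succ * g j.succ - A j.succ * g j.succ := by
      intro j; rw [hiii j]; ring
    simp only [this]
    rw [Finset.sum_sub_distrib]
    rw [Fin.sum_univ_succ (f := fun m : Fin (n+1) => c m * g m),
        Fin.sum_univ_succ (f := fun m : Fin (n+1) => A m * g m)]
    ring
  rw [e1, e2, hii, hiv]
  ring

noncomputable def LL (n : ℕ) : Matrix (Fin n) (Fin n) ℂ :=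
  Matrix.of fun k j => if (k:ℕ) ≤ (j:ℕ) then 1 else 0

noncomputable def MM {n : ℕ} (lam : Fin (n+1) → ℂ) : Matrix (Fin n) (Fin n) ℂ :=
  Matrix.of fun i k => lam k.castSucc ^ (i:ℕ) * (dd lam k.castSucc)⁻¹

lemma det_LL (n : ℕ) : (LL n).det = 1 := by
  have h : (LL n).BlockTriangular id := by
    intro i j hij
    simp only [LL, Matrix.of_apply]
    rw [if_neg]
    simp only [id] at hij
    omega
  rw [Matrix.det_of_upperTriangular h]
  refine Finset.prod_eq_one fun i _ => ?_
  simp [LL]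

lemma det_MM {n : ℕ} (lam : Fin (n+1) → ℂ) :
    (MM lam).det = (∏ k : Fin n, (dd lam k.castSucc)⁻¹) *
      ∏ i : Fin n, ∏ j ∈ Finset.Ioi i, (lam j.castSucc - lam i.castSucc) := by
  have : MM lam = Matrix.of fun i k => (dd lam k.castSucc)⁻¹ *
      Matrix.transpose (Matrix.vandermonde (fun k : Fin n => lam k.castSucc)) i k := by
    ext i k
    simp [MM, Matrix.vandermonde, Matrix.transpose, mul_comm]
  rw [this, Matrix.det_mul_row, Matrix.det_transpose, Matrix.det_vandermonde]

lemma erase_prod_eq_ite {m : ℕ} (a : Fin m) (f : Fin m → ℂ) :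
    ∏ l ∈ Finset.univ.erase a, f l = ∏ l : Fin m, if l = a then 1 else f l := by
  rw [show (∏ l ∈ Finset.univ.erase a, f l)
      = ∏ l ∈ Finset.univ.erase a, (if l = a then 1 else f l) from
    Finset.prod_congr rfl fun l hl => (if_neg (Finset.mem_erase.mp hl).1).symm]
  exact Finset.prod_erase _ (if_pos rfl)

lemma prod_Ioi_castSucc {n : ℕ} (a : Fin n) (f : Fin (n+1) → ℂ) :
    ∏ j ∈ Finset.Ioi a.castSucc, f j
      = (∏ j ∈ Finset.Ioi a, f j.castSucc) * f (Fin.last n) := by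
  rw [← Finset.filter_lt_eq_Ioi, ← Finset.filter_lt_eq_Ioi,
    Finset.prod_filter, Finset.prod_filter]
  rw [Fin.prod_univ_castSucc (f := fun j : Fin (n+1) => if a.castSucc < j then f j else 1)]
  rw [if_pos (Fin.castSucc_lt_last a)]
  congr 1

lemma prod_erase_castSucc {n : ℕ} (lam : Fin (n+1) → ℂ) (k : Fin n) :
    dd lam k.castSucc
      = (∏ l ∈ Finset.univ.erase k, (lam k.castSucc - lam l.castSucc)) *
        (lam k.castSucc - lam (Fin.last n)) := by
  rw [dd, erase_prod_eq_ite, Fin.prod_univ_castSucc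
    (f := fun l : Fin (n+1) => if l = k.castSucc then 1 else (lam k.castSucc - lam l))]
  rw [if_neg (Fin.castSucc_lt_last k).ne']
  congr 1
  rw [erase_prod_eq_ite]
  refine Finset.prod_congr rfl fun l _ => ?_
  congr 1
  simp [Fin.castSucc_inj]

lemma offdiag_erase {n : ℕ} (u : Fin n → ℂ) :
    ∏ i : Fin n, ∏ j ∈ Finset.univ.erase i, (u i - u j)
      = ∏ i : Fin n, ∏ j ∈ Finset.Ioi i, ((u i - u j) * (u j - u i)) := by
  have hoff := Finset.prod_prod_Ioi_mul_eq_prod_prod_off_diag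
    (f := fun j i : Fin n => u i - u j)
  rw [hoff]
  refine Finset.prod_congr rfl fun i _ => Finset.prod_congr ?_ fun j _ => rfl
  ext j; simp [eq_comm]

lemma prod_dd_eq {n : ℕ} (lam : Fin (n+1) → ℂ) :
    ∏ k : Fin n, dd lam k.castSucc
      = (∏ i : Fin (n+1), ∏ j ∈ Finset.Ioi i, (lam i - lam j)) *
        ∏ i : Fin n, ∏ j ∈ Finset.Ioi i, (lam j.castSucc - lam i.castSucc) := by
  have hlast : (Finset.Ioi (Fin.last n)) = (∅ : Finset (Fin (n+1))) := by
    ext j; simpa using Fin.le_last j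
  have hG : (∏ i : Fin (n+1), ∏ j ∈ Finset.Ioi i, (lam i - lam j))
      = (∏ k : Fin n, ∏ j ∈ Finset.Ioi k, (lam k.castSucc - lam j.castSucc)) *
        ∏ k : Fin n, (lam k.castSucc - lam (Fin.last n)) := by
    rw [Fin.prod_univ_castSucc
      (f := fun i : Fin (n+1) => ∏ j ∈ Finset.Ioi i, (lam i - lam j))]
    rw [hlast, Finset.prod_empty, mul_one]
    have h2 : ∀ k : Fin n, ∏ j ∈ Finset.Ioi k.castSucc, (lam k.castSucc - lam j)
        = (∏ j ∈ Finset.Ioi k, (lam k.castSucc - lam j.castSucc)) *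
          (lam k.castSucc - lam (Fin.last n)) := fun k =>
      prod_Ioi_castSucc k (fun j => lam k.castSucc - lam j)
    simp only [h2]
    rw [Finset.prod_mul_distrib]
  simp only [prod_erase_castSucc lam]
  rw [Finset.prod_mul_distrib, offdiag_erase, hG]
  simp only [Finset.prod_mul_distrib]
  ring

open Finset in
/-- Change of basis between `η_i(x) = x^{i-1}/∏_k (x - λ_k)` and
`ω_i(x) = 1/(x - λ_i) - 1/(x - λ_{i+1})` for `n + 1 ≥ 2` pairwise distinct points
`λ₀, …, λₙ`: there is a matrix `C` expressing the `η`'s in terms of the `ω`'s away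
from the poles, with `det C = 1/∏_{i<j}(λ_i - λ_j)`. -/
theorem eta_omega_change_of_basis (n : ℕ) (hn : 1 ≤ n) (lam : Fin (n + 1) → ℂ)
    (hlam : Function.Injective lam) :
    ∃ C : Matrix (Fin n) (Fin n) ℂ,
      (∀ i : Fin n, ∀ x : ℂ, (∀ k : Fin (n + 1), x ≠ lam k) →
        x ^ (i : ℕ) / (∏ k : Fin (n + 1), (x - lam k)) =
          ∑ j : Fin n, C i j *
            (1 / (x - lam j.castSucc) - 1 / (x - lam j.succ))) ∧
      C.det = 1 / ∏ i : Fin (n + 1), ∏ j ∈ Finset.Ioi i, (lam i - lam j) := by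
  refine ⟨MM lam * LL n, ?_, ?_⟩
  · intro i x hx
    have hentry : ∀ j : Fin n, (MM lam * LL n) i j
        = ∑ k : Fin n, if (k:ℕ) ≤ (j:ℕ)
            then lam k.castSucc ^ (i:ℕ) * (dd lam k.castSucc)⁻¹ else 0 := by
      intro j
      rw [Matrix.mul_apply]
      refine Finset.sum_congr rfl fun k _ => ?_
      simp only [MM, LL, Matrix.of_apply, mul_ite, mul_one, mul_zero]
    simp only [hentry]
    rw [abel_rearrange (fun k => lam k ^ (i:ℕ) * (dd lam k)⁻¹)
      (fun k => 1 / (x - lam k)) (sum_A_zero hlam (i:ℕ) i.isLt)]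
    exact partial_fractions hlam (i:ℕ) (Nat.le_of_lt_succ (Nat.lt_succ_of_lt i.isLt)) x hx
  · rw [Matrix.det_mul, det_LL, mul_one, det_MM]
    have hG : (∏ i : Fin (n+1), ∏ j ∈ Finset.Ioi i, (lam i - lam j)) ≠ 0 := by
      refine Finset.prod_ne_zero_iff.mpr fun i _ => Finset.prod_ne_zero_iff.mpr fun j hj => ?_
      exact sub_ne_zero_of_ne fun h => (Finset.mem_Ioi.mp hj).ne' (hlam h).symm
    have hV : (∏ i : Fin n, ∏ j ∈ Finset.Ioi i, (lam j.castSucc - lam i.castSucc)) ≠ 0 := by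
      refine Finset.prod_ne_zero_iff.mpr fun i _ => Finset.prod_ne_zero_iff.mpr fun j hj => ?_
      refine sub_ne_zero_of_ne fun h => (Finset.mem_Ioi.mp hj).ne' ?_
      exact Fin.castSucc_inj.mp (hlam h)
    rw [show (∏ k : Fin n, (dd lam k.castSucc)⁻¹)
        = (∏ k : Fin n, dd lam k.castSucc)⁻¹ from Finset.prod_inv_distrib _,
      prod_dd_eq lam]
    field_simp
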